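/- In the TA optimization setting: let R^p be a simple probabilistic relation with tuples sorted by decreasing score t_1 ≻ ... ≻ t_n, and let t be any tuple with score below that of t_i and probability p(t) ≤ p̄. Then its Global-Topk probability is bounded: P_k(t) ≤ (q(k,i)·(1−p(t_i))/p(t_i) + q(k−1,i))·p̄, where q(k,i) is the Global-Topk probability of t_i. -/

import Mathlib

open Finset

/-- Weight of a possible world `W` in a simple probabilistic relation. -/
def tw (n : ℕ) (p : ℕ → ℝ) (W : Finset ℕ) : ℝ :=
  (∏ l ∈ W, p l) * ∏ l ∈ Finset.Icc 1 n \ W, (1 - p l)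

lemma tw_nonneg (n : ℕ) (p : ℕ → ℝ)
    (hp : ∀ l ∈ Finset.Icc 1 n, p l ∈ Set.Ioc (0 : ℝ) 1)
    (W : Finset ℕ) (hW : W ⊆ Finset.Icc 1 n) : 0 ≤ tw n p W := by
  apply mul_nonneg
  · exact Finset.prod_nonneg fun l hl => ((hp l (hW hl)).1).le
  · refine Finset.prod_nonneg fun l hl => ?_
    have := (hp l (Finset.mem_sdiff.1 hl).1).2
    linarith

lemma tw_insert (n : ℕ) (p : ℕ → ℝ) (m : ℕ) (hm : m ∈ Finset.Icc 1 n)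
    (W : Finset ℕ) (hmW : m ∉ W) :
    p m * tw n p W = (1 - p m) * tw n p (insert m W) := by
  have hm' : m ∈ Finset.Icc 1 n \ W := Finset.mem_sdiff.2 ⟨hm, hmW⟩
  have h1 : Finset.Icc 1 n \ W = insert m (Finset.Icc 1 n \ insert m W) := by
    rw [Finset.sdiff_insert, Finset.insert_erase hm']
  have h2 : m ∉ Finset.Icc 1 n \ insert m W := by simp
  rw [tw, tw, h1, Finset.prod_insert h2, Finset.prod_insert hmW]
  ring

/-- TA threshold bound: in a simple probabilistic relation with tuples sorted by
decreasing score, any tuple `t` (of index `j`) with score below that of `t_i`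
and probability at most `p̄` has Global-Topk probability bounded by
`(q(k,i)·(1-p tᵢ)/p tᵢ + q(k-1,i)) · p̄`. -/
theorem ta_threshold_bound (n : ℕ) (p : ℕ → ℝ)
    (hp : ∀ l ∈ Finset.Icc 1 n, p l ∈ Set.Ioc (0 : ℝ) 1)
    (q : ℕ → ℕ → ℝ)
    (hq : ∀ k i, q k i =
      ∑ W ∈ (Finset.Icc 1 n).powerset.filter
          (fun W => i ∈ W ∧ (W.filter (fun l => l < i)).card < k),
        (∏ l ∈ W, p l) * ∏ l ∈ Finset.Icc 1 n \ W, (1 - p l))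
    (k i j : ℕ) (hk : 1 ≤ k) (hi : 1 ≤ i) (hij : i < j) (hj : j ≤ n)
    (pbar : ℝ) (hpbar : p j ≤ pbar) :
    q k j ≤ (q k i * (1 - p i) / p i + q (k - 1) i) * pbar := by
  have hin : i ∈ Finset.Icc 1 n := Finset.mem_Icc.2 ⟨hi, le_trans hij.le hj⟩
  have hjn : j ∈ Finset.Icc 1 n := Finset.mem_Icc.2 ⟨le_trans hi hij.le, hj⟩
  have hpi : 0 < p i := (hp i hin).1
  have hpj : 0 < p j := (hp j hjn).1
  have hpbar0 : 0 < pbar := lt_of_lt_of_le hpj hpbar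
  have hqtw : ∀ k' i', q k' i' =
      ∑ W ∈ (Finset.Icc 1 n).powerset.filter
        (fun W => i' ∈ W ∧ (W.filter (fun l => l < i')).card < k'), tw n p W := hq
  set P := (Finset.Icc 1 n).powerset with hP
  set G : Finset (Finset ℕ) :=
    P.filter (fun W => (W.filter (fun l => l ≤ i)).card < k) with hG
  -- Claim A : ∑ over G = RHS coefficient
  have key1 : ∀ W : Finset ℕ, i ∈ W →
      (W.filter (fun l => l ≤ i)).card = (W.filter (fun l => l < i)).card + 1 := by
    intro W hiW
    have hfe : W.filter (fun l => l ≤ i) = insert i (W.filter (fun l => l < i)) := by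
      ext x
      simp only [Finset.mem_filter, Finset.mem_insert]
      constructor
      · rintro ⟨hx, hxi⟩
        rcases eq_or_lt_of_le hxi with h | h
        · exact Or.inl h
        · exact Or.inr ⟨hx, h⟩
      · rintro (rfl | ⟨hx, hxi⟩)
        · exact ⟨hiW, le_refl _⟩
        · exact ⟨hx, hxi.le⟩
    rw [hfe, Finset.card_insert_of_notMem (by simp)]
  have claimA : ∑ W ∈ G, tw n p W = q k i * (1 - p i) / p i + q (k - 1) i := by
    have hsplit := Finset.sum_filter_add_sum_filter_not G (fun W => i ∈ W) (tw n p)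
    have hG1 : G.filter (fun W => i ∈ W) =
        P.filter (fun W => i ∈ W ∧ (W.filter (fun l => l < i)).card < k - 1) := by
      ext W
      simp only [hG, Finset.mem_filter]
      constructor
      · rintro ⟨⟨hWs, hc⟩, hiW⟩
        exact ⟨hWs, hiW, by have := key1 W hiW; omega⟩
      · rintro ⟨hWs, hiW, hc⟩
        exact ⟨⟨hWs, by have := key1 W hiW; omega⟩, hiW⟩
    have hG0 : G.filter (fun W => ¬ i ∈ W) =
        P.filter (fun W => i ∉ W ∧ (W.filter (fun l => l < i)).card < k) := by
      ext W
      have hfe : i ∉ W → W.filter (fun l => l ≤ i) = W.filter (fun l => l < i) := by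
        intro hiW
        ext x
        simp only [Finset.mem_filter]
        constructor
        · rintro ⟨hx, hxi⟩
          refine ⟨hx, lt_of_le_of_ne hxi ?_⟩
          rintro rfl; exact hiW hx
        · rintro ⟨hx, hxi⟩; exact ⟨hx, hxi.le⟩
      simp only [hG, Finset.mem_filter]
      constructor
      · rintro ⟨⟨hWs, hc⟩, hiW⟩
        exact ⟨hWs, hiW, by rwa [hfe hiW] at hc⟩
      · rintro ⟨hWs, hiW, hc⟩
        exact ⟨⟨hWs, by rwa [hfe hiW]⟩, hiW⟩
    have hbij : ∑ W ∈ P.filter (fun W => i ∉ W ∧ (W.filter (fun l => l < i)).card < k),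
        tw n p W =
        ∑ W ∈ P.filter (fun W => i ∈ W ∧ (W.filter (fun l => l < i)).card < k),
        (1 - p i) / p i * tw n p W := by
      refine Finset.sum_bij' (fun W _ => insert i W) (fun W _ => W.erase i) ?_ ?_ ?_ ?_ ?_
      · intro W hW
        simp only [hP, Finset.mem_filter, Finset.mem_powerset] at hW ⊢
        obtain ⟨hWs, hiW, hc⟩ := hW
        refine ⟨Finset.insert_subset hin hWs, Finset.mem_insert_self i W, ?_⟩
        rwa [Finset.filter_insert, if_neg (lt_irrefl i)]
      · intro W hW
        simp only [hP, Finset.mem_filter, Finset.mem_powerset] at hW ⊢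
        obtain ⟨hWs, hiW, hc⟩ := hW
        refine ⟨Finset.Subset.trans (Finset.erase_subset i W) hWs,
          Finset.notMem_erase i W, ?_⟩
        refine lt_of_le_of_lt (Finset.card_le_card ?_) hc
        intro x hx
        simp only [Finset.mem_filter, Finset.mem_erase] at hx ⊢
        exact ⟨hx.1.2, hx.2⟩
      · intro W hW
        simp only [hP, Finset.mem_filter, Finset.mem_powerset] at hW
        exact Finset.erase_insert hW.2.1
      · intro W hW
        simp only [hP, Finset.mem_filter, Finset.mem_powerset] at hW
        exact Finset.insert_erase hW.2.1
      · intro W hW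
        simp only [hP, Finset.mem_filter, Finset.mem_powerset] at hW
        obtain ⟨hWs, hiW, hc⟩ := hW
        have := tw_insert n p i hin W hiW
        field_simp
        linarith [this]
    rw [← hsplit, hG1, hG0, hbij, ← Finset.mul_sum, ← hqtw (k-1) i, ← hqtw k i]
    ring
  -- Claim B : q k j ≤ pbar * ∑ over G
  set S : Finset (Finset ℕ) :=
    P.filter (fun W => j ∈ W ∧ (W.filter (fun l => l < j)).card < k) with hS
  have hSmem : ∀ W ∈ S, W ⊆ Finset.Icc 1 n ∧ j ∈ W ∧
      (W.filter (fun l => l < j)).card < k := by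
    intro W hW
    simp only [hS, hP, Finset.mem_filter, Finset.mem_powerset] at hW
    exact hW
  have hSsubG : S ⊆ G := by
    intro W hW
    obtain ⟨hWs, hjW, hc⟩ := hSmem W hW
    simp only [hG, hP, Finset.mem_filter, Finset.mem_powerset]
    refine ⟨hWs, lt_of_le_of_lt (Finset.card_le_card ?_) hc⟩
    intro x hx
    simp only [Finset.mem_filter] at hx ⊢
    exact ⟨hx.1, lt_of_le_of_lt hx.2 hij⟩
  have hS'subG : ∀ W ∈ S, W.erase j ∈ G := by
    intro W hW
    obtain ⟨hWs, hjW, hc⟩ := hSmem W hW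
    simp only [hG, hP, Finset.mem_filter, Finset.mem_powerset]
    refine ⟨Finset.Subset.trans (Finset.erase_subset j W) hWs,
      lt_of_le_of_lt (Finset.card_le_card ?_) hc⟩
    intro x hx
    simp only [Finset.mem_filter, Finset.mem_erase] at hx ⊢
    exact ⟨hx.1.2, lt_of_le_of_lt hx.2 hij⟩
  have step1 : ∀ W ∈ S, tw n p W ≤ pbar * (tw n p W + tw n p (W.erase j)) := by
    intro W hW
    obtain ⟨hWs, hjW, hc⟩ := hSmem W hW
    have h1 : p j * tw n p (W.erase j) = (1 - p j) * tw n p W := by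
      have := tw_insert n p j hjn (W.erase j) (Finset.notMem_erase j W)
      rwa [Finset.insert_erase hjW] at this
    have hXnn : 0 ≤ tw n p W + tw n p (W.erase j) := by
      have := tw_nonneg n p hp W hWs
      have := tw_nonneg n p hp (W.erase j)
        (Finset.Subset.trans (Finset.erase_subset j W) hWs)
      linarith
    have h2 : tw n p W = p j * (tw n p W + tw n p (W.erase j)) := by
      nlinarith [h1]
    exact h2.le.trans (mul_le_mul_of_nonneg_right hpbar hXnn)
  have hinj : ∀ x ∈ S, ∀ y ∈ S, x.erase j = y.erase j → x = y := by
    intro x hx y hy hxy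
    have hjx := (hSmem x hx).2.1
    have hjy := (hSmem y hy).2.1
    rw [← Finset.insert_erase hjx, ← Finset.insert_erase hjy, hxy]
  have hdisj : Disjoint S (S.image (fun W => W.erase j)) := by
    rw [Finset.disjoint_left]
    intro W hW hW'
    obtain ⟨V, hV, rfl⟩ := Finset.mem_image.1 hW'
    exact Finset.notMem_erase j V (hSmem _ hW).2.1
  have claimB : ∑ W ∈ S, tw n p W ≤ pbar * ∑ W ∈ G, tw n p W := by
    calc ∑ W ∈ S, tw n p W
        ≤ ∑ W ∈ S, pbar * (tw n p W + tw n p (W.erase j)) := Finset.sum_le_sum step1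
      _ = pbar * (∑ W ∈ S, tw n p W + ∑ W ∈ S, tw n p (W.erase j)) := by
          rw [← Finset.mul_sum, Finset.sum_add_distrib]
      _ = pbar * ∑ W ∈ S ∪ S.image (fun W => W.erase j), tw n p W := by
          rw [Finset.sum_union hdisj, Finset.sum_image hinj]
      _ ≤ pbar * ∑ W ∈ G, tw n p W := by
          refine mul_le_mul_of_nonneg_left ?_ hpbar0.le
          refine Finset.sum_le_sum_of_subset_of_nonneg ?_ ?_
          · refine Finset.union_subset hSsubG ?_
            intro W hW
            obtain ⟨V, hV, rfl⟩ := Finset.mem_image.1 hW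
            exact hS'subG V hV
          · intro W hW _
            refine tw_nonneg n p hp W ?_
            simp only [hG, hP, Finset.mem_filter, Finset.mem_powerset] at hW
            exact hW.1
  calc q k j = ∑ W ∈ S, tw n p W := hqtw k j
    _ ≤ pbar * ∑ W ∈ G, tw n p W := claimB
    _ = (q k i * (1 - p i) / p i + q (k - 1) i) * pbar := by rw [claimA]; ring
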